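/- Let E/F be a finite field extension with char F = 0, U a finite-dimensional vector space over E, and let Tr_{E/F} : {symmetric E-bilinear forms on U} → {symmetric F-bilinear forms on U viewed as an F-space} be defined by Tr(B)(u,v) = Tr_{E/F}(B(u,v)). Then Tr_{E/F} is injective, and its image is exactly the set of symmetric F-bilinear forms B on U satisfying B(λu, v) = B(u, λv) for all λ ∈ E and u, v ∈ U. -/

import Mathlib

/-- For a finite extension `E/F` of fields of characteristic 0 and a finite-dimensional
`E`-vector space `U`, the trace map `B ↦ Tr_{E/F} ∘ B` from symmetric `E`-bilinear forms
on `U` to symmetric `F`-bilinear forms on `U` is injective, and its image is exactly the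
set of symmetric `F`-bilinear forms `C` satisfying `C(λ•u, v) = C(u, λ•v)` for all
`λ ∈ E`. -/
theorem stmt_14 {F E U : Type*} [Field F] [CharZero F] [Field E] [Algebra F E]
    [FiniteDimensional F E] [AddCommGroup U] [Module F U] [Module E U]
    [IsScalarTower F E U] [FiniteDimensional E U] :
    (∀ B B' : LinearMap.BilinForm E U,
      (∀ x y, B x y = B y x) → (∀ x y, B' x y = B' y x) →
      (∀ u v, Algebra.trace F E (B u v) = Algebra.trace F E (B' u v)) → B = B') ∧
    (∀ C : LinearMap.BilinForm F U,
      ((∀ x y, C x y = C y x) ∧ ∀ (l : E) (u v : U), C (l • u) v = C u (l • v)) ↔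
      ∃ B : LinearMap.BilinForm E U, (∀ x y, B x y = B y x) ∧
        ∀ u v, C u v = Algebra.trace F E (B u v)) := by
  have hnd := traceForm_nondegenerate F E
  -- key: elements of E are determined by traces of multiples
  have key : ∀ x y : E,
      (∀ l : E, Algebra.trace F E (x * l) = Algebra.trace F E (y * l)) → x = y := by
    intro x y h
    have h0 : ∀ l : E, Algebra.traceForm F E (x - y) l = 0 := by
      intro l
      simp only [map_sub, LinearMap.sub_apply, Algebra.traceForm_apply, h l, sub_self]
    exact sub_eq_zero.mp (hnd.1 _ h0)
  constructor
  · intro B B' hB hB' htr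
    ext u v
    refine key (B u v) (B' u v) fun l => ?_
    have h1 : B u v * l = B (l • u) v := by
      rw [LinearMap.map_smul₂, smul_eq_mul, mul_comm]
    have h2 : B' u v * l = B' (l • u) v := by
      rw [LinearMap.map_smul₂, smul_eq_mul, mul_comm]
    rw [h1, h2, htr]
  · intro C
    constructor
    · rintro ⟨hsymm, hlam⟩
      let e : E ≃ₗ[F] Module.Dual F E :=
        (Algebra.traceForm F E).toDual hnd
      -- the dual functional l ↦ C (l • u) v
      let d : U → U → Module.Dual F E := fun u v =>
        { toFun := fun l => C (l • u) v
          map_add' := fun a b => by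
            show C ((a + b) • u) v = C (a • u) v + C (b • u) v
            rw [add_smul, map_add, LinearMap.add_apply]
          map_smul' := fun a b => by
            show C ((a • b) • u) v = a • C (b • u) v
            rw [smul_assoc, LinearMap.map_smul₂] }
      let bv : U → U → E := fun u v => e.symm (d u v)
      have hb : ∀ (u v : U) (l : E),
          Algebra.trace F E (bv u v * l) = C (l • u) v := by
        intro u v l
        have he : e (bv u v) = d u v := e.apply_symm_apply (d u v)
        have : Algebra.traceForm F E (bv u v) l = d u v l := by
          calc Algebra.traceForm F E (bv u v) l
              = e (bv u v) l := by
                rw [show e (bv u v) = (Algebra.traceForm F E).toDual hnd (bv u v) from rfl,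
                  LinearMap.BilinForm.toDual_def]
            _ = d u v l := by rw [he]
        simpa [Algebra.traceForm_apply, d] using this
      refine ⟨LinearMap.mk₂ E bv ?_ ?_ ?_ ?_, ?_, ?_⟩
      · intro u₁ u₂ v
        refine key _ _ fun l => ?_
        rw [hb, add_mul, map_add, hb, hb, smul_add, map_add, LinearMap.add_apply]
      · intro c u v
        refine key _ _ fun l => ?_
        have h1 := hb (c • u) v l
        have h2 := hb u v (l * c)
        rw [h1, ← mul_smul, ← h2, smul_eq_mul]
        ring_nf
      · intro u v₁ v₂
        refine key _ _ fun l => ?_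
        rw [hb, map_add, add_mul, map_add, hb, hb]
      · intro c u v
        refine key _ _ fun l => ?_
        have h1 := hb u (c • v) l
        have h2 := hb u v (c * l)
        rw [h1, ← hlam c (l • u) v, smul_smul, ← h2, smul_eq_mul]
        ring_nf
      · intro u v
        simp only [LinearMap.mk₂_apply]
        refine key _ _ fun l => ?_
        rw [hb, hb]
        exact (hlam l u v).trans (hsymm _ _)
      · intro u v
        simp only [LinearMap.mk₂_apply]
        have h := hb u v 1
        rw [mul_one, one_smul] at h
        exact h.symm
    · rintro ⟨B, hBsymm, hBC⟩
      refine ⟨fun x y => by rw [hBC, hBC, hBsymm x y], fun l u v => ?_⟩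
      rw [hBC, hBC, LinearMap.map_smul₂, (B u).map_smul]
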